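/- Let A = diag(x₄, x₁, x₁, x₂, x₂, x₃, x₃) act on 𝔪 = span(X₀, X₁,...,X₆) ⊆ su(3) (with X₀,...,X₆ as in the Aloff–Wallach setup for pairwise distinct k, l, m with k+l+m=0), and suppose x₁ = x₂ = x₃ = x. Then for any X = Σᵢ αᵢXᵢ ∈ 𝔪, setting β = (x₄/x − 1)α₀(l−m)f, γ = (x₄/x − 1)α₀(m−k)f with f = √(2/(3L)), and V+W = i·diag(β, γ, −β−γ), one has [A(X), X+V+W] = 0. -/

import Mathlib

open Matrix Complex

noncomputable section

/-- in the Aloff–Wallach setup on su(3), if x₁ = x₂ = x₃ = x then for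
every X = Σ αᵢXᵢ the choice β = (x₄/x − 1)α₀(l−m)f, γ = (x₄/x − 1)α₀(m−k)f
(f = √(2/(3L))) of the diagonal correction V+W = i·diag(β,γ,−β−γ) gives
[A(X), X+V+W] = 0. -/
theorem stmt11 (k l m L f : ℝ) (hklm : k + l + m = 0)
    (hd1 : k ≠ l) (hd2 : k ≠ m) (hd3 : l ≠ m)
    (hL : L = k ^ 2 + l ^ 2 + m ^ 2) (hf : f = Real.sqrt (2 / (3 * L)))
    (v : Fin 7 → Matrix (Fin 3) (Fin 3) ℂ)
    (hv0 : v 0 = (f : ℂ) • !![(l - m) * I, 0, 0; 0, (m - k) * I, 0; 0, 0, (k - l) * I])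
    (hv1 : v 1 = !![0, 1, 0; -1, 0, 0; 0, 0, 0])
    (hv2 : v 2 = !![0, I, 0; I, 0, 0; 0, 0, 0])
    (hv3 : v 3 = !![0, 0, 1; 0, 0, 0; -1, 0, 0])
    (hv4 : v 4 = !![0, 0, I; 0, 0, 0; I, 0, 0])
    (hv5 : v 5 = !![0, 0, 0; 0, 0, 1; 0, -1, 0])
    (hv6 : v 6 = !![0, 0, 0; 0, 0, I; 0, I, 0])
    (x₁ x₂ x₃ x₄ x : ℝ) (hx : 0 < x) (hx4 : 0 < x₄)
    (h1 : x₁ = x) (h2 : x₂ = x) (h3 : x₃ = x)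
    (α : Fin 7 → ℝ) (β γ : ℝ)
    (hβ : β = (x₄ / x - 1) * α 0 * (l - m) * f)
    (hγ : γ = (x₄ / x - 1) * α 0 * (m - k) * f)
    (X AX D : Matrix (Fin 3) (Fin 3) ℂ)
    (hX : X = ∑ i, α i • v i)
    (hAX : AX = (x₄ * α 0) • v 0 + (x₁ * α 1) • v 1 + (x₁ * α 2) • v 2 +
      (x₂ * α 3) • v 3 + (x₂ * α 4) • v 4 + (x₃ * α 5) • v 5 + (x₃ * α 6) • v 6)
    (hD : D = !![(β : ℂ) * I, 0, 0; 0, (γ : ℂ) * I, 0; 0, 0, (-(β : ℂ) - γ) * I]) :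
    ⁅AX, X + D⁆ = 0 := by
  have hx' : (x:ℂ) ≠ 0 := by exact_mod_cast hx.ne'
  have e1 : AX = (x:ℂ) • X + (((x₄ - x) * α 0 : ℝ) : ℂ) • v 0 := by
    rw [hAX, hX, h1, h2, h3]
    simp only [Fin.sum_univ_seven, ← Complex.coe_smul]
    push_cast
    module
  have e2 : (x:ℂ) • D = (((x₄ - x) * α 0 : ℝ) : ℂ) • v 0 := by
    rw [hD, hv0, hβ, hγ]
    ext i j
    fin_cases i <;> fin_cases j <;>
      (try simp [Matrix.smul_apply]) <;> (try push_cast) <;> (try field_simp) <;> (try ring) <;>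
      simp [Matrix.vecHead, Matrix.vecTail]
  have key : AX = (x:ℂ) • (X + D) := by rw [smul_add, e1, e2]
  rw [key, Ring.lie_def, smul_mul_assoc, mul_smul_comm, sub_self]
end
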